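/- Let A and B be r×r positive semidefinite Hermitian matrices. Then det(I + A + B) ≤ det(I + A)·det(I + B). -/

import Mathlib

open Matrix ComplexOrder
open scoped MatrixOrder

variable {r : ℕ}

/-- Eigenvalues of a PSD matrix dominated by `1` are at most `1`. -/
lemma aux_eigenvalues_le_one {R : Matrix (Fin r) (Fin r) ℂ} (hR : R.PosSemidef)
    (h1 : ((1 : Matrix (Fin r) (Fin r) ℂ) - R).PosSemidef) (i : Fin r) :
    hR.1.eigenvalues i ≤ 1 := by
  have hv := hR.1.eigenvalues_eq i
  set v := ⇑(hR.1.eigenvectorBasis i) with hvdef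
  have hnorm : (star v) ⬝ᵥ v = (1 : ℂ) := by
    have := hR.1.eigenvectorBasis.orthonormal.1 i
    have h2 := EuclideanSpace.inner_eq_star_dotProduct (hR.1.eigenvectorBasis i)
      (hR.1.eigenvectorBasis i)
    rw [hvdef, dotProduct_comm, ← EuclideanSpace.inner_eq_star_dotProduct, inner_self_eq_norm_sq_to_K,
      hR.1.eigenvectorBasis.orthonormal.1 i]
    norm_num
  have hpos := h1.re_dotProduct_nonneg v
  rw [sub_mulVec, dotProduct_sub, one_mulVec] at hpos
  rw [hv]
  have h3 : RCLike.re ((star v) ⬝ᵥ v) = 1 := by rw [hnorm]; simp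
  rw [map_sub, h3] at hpos
  linarith

/-- det monotone: PSD `P ≤ Q` with `Q` PosDef implies `det P ≤ det Q`. -/
lemma aux_det_le_det {P Q : Matrix (Fin r) (Fin r) ℂ} (hP : P.PosSemidef) (hQ : Q.PosDef)
    (hQP : (Q - P).PosSemidef) : P.det ≤ Q.det := by
  set S := CFC.sqrt Q with hS
  have hSpsd : S.PosSemidef := (CFC.sqrt_nonneg Q).posSemidef
  have hSS : S * S = Q := CFC.sqrt_mul_sqrt_self Q hQ.posSemidef.nonneg
  have hSunit : IsUnit S.det := by
    have : S.det * S.det = Q.det := by rw [← det_mul, hSS]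
    exact isUnit_of_mul_isUnit_left (this ▸ hQ.det_pos.ne'.isUnit)
  have hSinv : S⁻¹ * S = 1 := nonsing_inv_mul S hSunit
  have hSinv' : S * S⁻¹ = 1 := mul_nonsing_inv S hSunit
  have hSinvH : S⁻¹ᴴ = S⁻¹ := hSpsd.isHermitian.inv
  set R := S⁻¹ * P * S⁻¹ with hR
  have hRpsd : R.PosSemidef := by
    have := hP.conjTranspose_mul_mul_same S⁻¹
    rwa [hSinvH] at this
  have h1R : ((1 : Matrix (Fin r) (Fin r) ℂ) - R).PosSemidef := by
    have key : (1 : Matrix (Fin r) (Fin r) ℂ) - R = S⁻¹ᴴ * (Q - P) * S⁻¹ := by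
      rw [hSinvH, hR, Matrix.mul_sub, Matrix.sub_mul, ← hSS]
      rw [show S⁻¹ * (S * S) * S⁻¹ = (S⁻¹ * S) * (S * S⁻¹) by noncomm_ring]
      rw [hSinv, hSinv', one_mul]
    rw [key]
    exact hQP.conjTranspose_mul_mul_same S⁻¹
  have hPR : P = S * R * S := by
    rw [hR, show S * (S⁻¹ * P * S⁻¹) * S = (S * S⁻¹) * P * (S⁻¹ * S) by noncomm_ring,
      hSinv, hSinv', one_mul, mul_one]
  have hRdet : R.det ≤ 1 := by
    rw [hRpsd.isHermitian.det_eq_prod_eigenvalues]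
    have : ∀ i, hRpsd.1.eigenvalues i ≤ 1 := aux_eigenvalues_le_one hRpsd h1R
    calc (∏ i, (hRpsd.1.eigenvalues i : ℂ))
        = ((∏ i, hRpsd.1.eigenvalues i : ℝ) : ℂ) := by push_cast; rfl
      _ ≤ ((1 : ℝ) : ℂ) := by
          rw [Complex.real_le_real]
          exact Finset.prod_le_one (fun i _ => hRpsd.eigenvalues_nonneg i)
            (fun i _ => this i)
      _ = 1 := by norm_num
  calc P.det = S.det * R.det * S.det := by rw [hPR, det_mul, det_mul]
    _ = Q.det * R.det := by
        have hQdet : Q.det = S.det * S.det := by rw [← hSS, det_mul]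
        rw [hQdet]; ring
    _ ≤ Q.det * 1 := by
        exact mul_le_mul_of_nonneg_left hRdet hQ.det_pos.le
    _ = Q.det := mul_one _

theorem det_one_add_add_le (r : ℕ) (A B : Matrix (Fin r) (Fin r) ℂ)
    (hA : A.PosSemidef) (hB : B.PosSemidef) :
    (1 + A + B).det ≤ (1 + A).det * (1 + B).det := by
  set X := (1 : Matrix (Fin r) (Fin r) ℂ) + A with hXdef
  have hX : X.PosDef := Matrix.PosDef.one.add_posSemidef hA
  have hXu : IsUnit X.det := hX.det_pos.ne'.isUnit
  have hXinv : X⁻¹ * X = 1 := nonsing_inv_mul X hXu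
  have hXinv' : X * X⁻¹ = 1 := mul_nonsing_inv X hXu
  have hXinvH : X⁻¹ᴴ = X⁻¹ := hX.isHermitian.inv
  set SB := CFC.sqrt B with hSBdef
  have hSBpsd : SB.PosSemidef := (CFC.sqrt_nonneg B).posSemidef
  have hSBH : SBᴴ = SB := hSBpsd.isHermitian
  have hSBSB : SB * SB = B := CFC.sqrt_mul_sqrt_self B hB.nonneg
  set M := SB * (X⁻¹ * SB) with hMdef
  have hMpsd : M.PosSemidef := by
    have := hX.inv.posSemidef.conjTranspose_mul_mul_same SB
    rwa [hSBH, mul_assoc] at this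
  -- factorization
  have hfact : 1 + A + B = X * (1 + X⁻¹ * SB * SB) := by
    rw [Matrix.mul_add, mul_one, show X * (X⁻¹ * SB * SB) = (X * X⁻¹) * (SB * SB) by
      noncomm_ring, hXinv', one_mul, hSBSB, hXdef]
  have hdet1 : (1 + A + B).det = X.det * (1 + M).det := by
    rw [hfact, det_mul, det_one_add_mul_comm, hMdef]
  -- 1 - X⁻¹ is PSD
  have hAApsd : (A + A * A).PosSemidef := by
    refine hA.add ?_
    rw [← pow_two]; exact hA.pow 2
  have h1Xinv : ((1 : Matrix (Fin r) (Fin r) ℂ) - X⁻¹).PosSemidef := by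
    have key : (1 : Matrix (Fin r) (Fin r) ℂ) - X⁻¹ = X⁻¹ᴴ * (A + A * A) * X⁻¹ := by
      have e1 : A + A * A = A * X := by rw [hXdef]; noncomm_ring
      rw [hXinvH, e1, show X⁻¹ * (A * X) * X⁻¹ = X⁻¹ * A * (X * X⁻¹) by noncomm_ring,
        hXinv', mul_one]
      have e2 : (1 : Matrix (Fin r) (Fin r) ℂ) - X⁻¹ = X⁻¹ * X - X⁻¹ * 1 := by
        rw [hXinv, mul_one]
      rw [e2, ← Matrix.mul_sub, hXdef]
      congr 1
      abel
    rw [key]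
    exact hAApsd.conjTranspose_mul_mul_same X⁻¹
  -- B - M is PSD
  have hBM : (B - M).PosSemidef := by
    have key : B - M = SBᴴ * ((1 : Matrix (Fin r) (Fin r) ℂ) - X⁻¹) * SB := by
      rw [hSBH, Matrix.mul_sub, Matrix.sub_mul, mul_one, hSBSB, hMdef, mul_assoc]
    rw [key]
    exact h1Xinv.conjTranspose_mul_mul_same SB
  -- monotonicity step
  have hmono : (1 + M).det ≤ (1 + B).det := by
    refine aux_det_le_det (Matrix.PosSemidef.one.add hMpsd)
      (Matrix.PosDef.one.add_posSemidef hB) ?_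
    rwa [add_sub_add_left_eq_sub]
  rw [hdet1, hXdef] at *
  calc (1 + A).det * (1 + M).det ≤ (1 + A).det * (1 + B).det :=
        mul_le_mul_of_nonneg_left hmono hX.det_pos.le
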